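/- Let q be a power of an odd prime and let G = 1 + 𝔤 be a pattern subgroup of UT_n(F_{q^k}), regarded over F_q, with † an involutive F_q-algebra antiautomorphism of 𝔤 satisfying (α e_ij)† ∈ F_{q^k}^× e_{j̄ ī} for all α ∈ F_{q^k}^×. Let 𝔥 = {x ∈ 𝔤 | x_ij = 0 if j ≤ n/2} and H = 1 + 𝔥. For λ ∈ 𝔤*, set 𝔩_λ = {x ∈ 𝔤 | λ(yx) = 0 for all y ∈ 𝔥}. Then the orbit Hλ = {hλ | h ∈ H}, where (hλ)(x) = λ(h⁻¹x), equals {μ ∈ 𝔤* | μ(x) = λ(x) for all x ∈ 𝔩_λ}. -/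

import Mathlib

open Matrix

section PatternGroups

variable (F : Type) [Field F] (E : Type) [Field E] [Algebra F E] {n : ℕ}

/-- The pattern subalgebra `𝔤 ⊆ 𝔲𝔱_n(E)` of matrices supported on the set `S` of strict
relations `i ≺ j` of a subposet of the usual linear order on `[n]`. -/
def patAlg (S : Set (Fin n × Fin n)) : Set (Matrix (Fin n) (Fin n) E) :=
  {x | ∀ i j : Fin n, (i, j) ∉ S → x i j = 0}

/-- The pattern subgroup `G = 1 + 𝔤`. -/
def patGrp (S : Set (Fin n × Fin n)) : Set (Matrix (Fin n) (Fin n) E) :=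
  {g | ∃ x ∈ patAlg E S, g = 1 + x}

/-- The two-sided ideal `𝔥 = {x ∈ 𝔤 | x_{ij} = 0 if j ≤ n/2}` (indices read 1-based). -/
def patHAlg (S : Set (Fin n × Fin n)) : Set (Matrix (Fin n) (Fin n) E) :=
  {x | x ∈ patAlg E S ∧ ∀ i j : Fin n, (j : ℕ) + 1 ≤ n / 2 → x i j = 0}

/-- The normal subgroup `H = 1 + 𝔥` of `G`. -/
def patHGrp (S : Set (Fin n × Fin n)) : Set (Matrix (Fin n) (Fin n) E) :=
  {g | ∃ x ∈ patHAlg E S, g = 1 + x}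

/-- The extension of `†` from `𝔤` to `G = 1 + 𝔤`: `(1+x)† = 1 + x†`. -/
def dagGrp (dag : Matrix (Fin n) (Fin n) E → Matrix (Fin n) (Fin n) E)
    (g : Matrix (Fin n) (Fin n) E) : Matrix (Fin n) (Fin n) E :=
  1 + dag (g - 1)

/-- The subgroup `U = {u ∈ G | u† = u⁻¹}` of the pattern group `G`. -/
def patUGrp (S : Set (Fin n × Fin n))
    (dag : Matrix (Fin n) (Fin n) E → Matrix (Fin n) (Fin n) E) :
    Set (Matrix (Fin n) (Fin n) E) :=
  {u | u ∈ patGrp E S ∧ u * dagGrp E dag u = 1 ∧ dagGrp E dag u * u = 1}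

/-- The set `𝔲 = {x ∈ 𝔤 | x† = -x}`. -/
def patUAlg (S : Set (Fin n × Fin n))
    (dag : Matrix (Fin n) (Fin n) E → Matrix (Fin n) (Fin n) E) :
    Set (Matrix (Fin n) (Fin n) E) :=
  {x | x ∈ patAlg E S ∧ dag x = -x}

/-- `†` is an involutive `F`-algebra antiautomorphism of the pattern algebra `𝔤` sending
each `α e_{ij}` (`α ∈ E^×`) into `E^× e_{\bar j \bar i}`, where `\bar i = n + 1 - i`. -/
structure IsPatternAntiInvolution (S : Set (Fin n × Fin n))
    (dag : Matrix (Fin n) (Fin n) E → Matrix (Fin n) (Fin n) E) : Prop where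
  map_mem : ∀ x ∈ patAlg E S, dag x ∈ patAlg E S
  map_add : ∀ x ∈ patAlg E S, ∀ y ∈ patAlg E S, dag (x + y) = dag x + dag y
  map_smul : ∀ (c : F), ∀ x ∈ patAlg E S,
    dag (algebraMap F E c • x) = algebraMap F E c • dag x
  map_mul : ∀ x ∈ patAlg E S, ∀ y ∈ patAlg E S, dag (x * y) = dag y * dag x
  invol : ∀ x ∈ patAlg E S, dag (dag x) = x
  elementary : ∀ i j : Fin n, (i, j) ∈ S → ∀ α : E, α ≠ 0 →
    ∃ β : E, β ≠ 0 ∧ dag (Matrix.single i j α) = Matrix.single j.rev i.rev β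

/-- A Springer morphism: a bijection `f : G → 𝔤` with `f(U) = 𝔲` and
`f(1+x) = x + Σ_{i ≥ 2} a_i x^i` with coefficients `a_i ∈ F`. -/
def IsSpringerMorphism (S : Set (Fin n × Fin n))
    (dag f : Matrix (Fin n) (Fin n) E → Matrix (Fin n) (Fin n) E) : Prop :=
  Set.BijOn f (patGrp E S) (patAlg E S) ∧
  f '' patUGrp E S dag = patUAlg E S dag ∧
  ∃ (N : ℕ) (a : ℕ → F), a 1 = 1 ∧
    ∀ x ∈ patAlg E S, f (1 + x) = ∑ i ∈ Finset.Ico 1 N, algebraMap F E (a i) • x ^ i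

/-- The orbit `G · w = {g w g† | g ∈ G}` of `w` under the action `g · x = g x g†`. -/
def patGrpDot (S : Set (Fin n × Fin n))
    (dag : Matrix (Fin n) (Fin n) E → Matrix (Fin n) (Fin n) E)
    (w : Matrix (Fin n) (Fin n) E) : Set (Matrix (Fin n) (Fin n) E) :=
  {z | ∃ g ∈ patGrp E S, z = g * w * dagGrp E dag g}

end PatternGroups

section Supercharacters

variable (F : Type) [Field F] (E : Type) [Field E] [Algebra F E] {n : ℕ}

/-- The orbit of `λ ∈ 𝔲*` under a subset `T ⊆ G` (for `T = G` or `T = H`), acting by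
`(g·λ)(x) = λ(g⁻¹ · x) = λ(g⁻¹ x (g⁻¹)†)`.  An element `λ ∈ 𝔲*` is recorded as a function
`𝔲 → F` (here represented via a functional `lam` on the full matrix space: only its values
on `𝔲` matter). -/
def patDualOrbit (S : Set (Fin n × Fin n))
    (dag : Matrix (Fin n) (Fin n) E → Matrix (Fin n) (Fin n) E)
    (T : Set (Matrix (Fin n) (Fin n) E))
    (lam : Module.Dual F (Matrix (Fin n) (Fin n) E)) :
    Set (↥(patUAlg E S dag) → F) :=
  {ψ | ∃ g ∈ T, ∀ x : ↥(patUAlg E S dag),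
    ψ x = lam (g⁻¹ * (x : Matrix (Fin n) (Fin n) E) * dagGrp E dag g⁻¹)}

/-- The supercharacter `χ_λ = (|H·λ|/|G·λ|) Σ_{μ ∈ G·λ} θ ∘ μ ∘ f` of `U`, for `λ ∈ 𝔲*`. -/
noncomputable def patSupchar (S : Set (Fin n × Fin n))
    (dag f : Matrix (Fin n) (Fin n) E → Matrix (Fin n) (Fin n) E)
    (θ : AddChar F ℂ) (lam : Module.Dual F (Matrix (Fin n) (Fin n) E))
    (u : Matrix (Fin n) (Fin n) E) : ℂ :=
  (Nat.card (patDualOrbit F E S dag (patHGrp E S) lam) : ℂ) /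
    (Nat.card (patDualOrbit F E S dag (patGrp E S) lam) : ℂ) *
    ∑ᶠ ψ ∈ patDualOrbit F E S dag (patGrp E S) lam,
      @dite ℂ (f u ∈ patUAlg E S dag) (Classical.propDecidable _)
        (fun h => θ (ψ ⟨f u, h⟩)) (fun _ => 0)

/-- The superclass `K_u = {v ∈ U | f(v) ∈ G · f(u)}` of `u`, as a subset of the ambient
matrix space. -/
def patSupclass (S : Set (Fin n × Fin n))
    (dag f : Matrix (Fin n) (Fin n) E → Matrix (Fin n) (Fin n) E)
    (u : Matrix (Fin n) (Fin n) E) : Set (Matrix (Fin n) (Fin n) E) :=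
  {v | v ∈ patUGrp E S dag ∧ f v ∈ patGrpDot E S dag (f u)}

end Supercharacters

section AuxStatement10

variable {F : Type} [Field F] {E : Type} [Field E] [Algebra F E] {n : ℕ}
  {S : Set (Fin n × Fin n)}

lemma patAlg_zero' : (0 : Matrix (Fin n) (Fin n) E) ∈ patAlg E S :=
  fun _ _ _ => rfl

lemma patAlg_add' {x y : Matrix (Fin n) (Fin n) E}
    (hx : x ∈ patAlg E S) (hy : y ∈ patAlg E S) : x + y ∈ patAlg E S := by
  intro i j hij
  rw [Matrix.add_apply, hx i j hij, hy i j hij, add_zero]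

lemma patAlg_smul' (c : F) {x : Matrix (Fin n) (Fin n) E}
    (hx : x ∈ patAlg E S) : c • x ∈ patAlg E S := by
  intro i j hij
  rw [Matrix.smul_apply, hx i j hij, smul_zero]

lemma patAlg_neg' {x : Matrix (Fin n) (Fin n) E}
    (hx : x ∈ patAlg E S) : -x ∈ patAlg E S := by
  intro i j hij
  rw [Matrix.neg_apply, hx i j hij, neg_zero]

lemma patHAlg_zero' : (0 : Matrix (Fin n) (Fin n) E) ∈ patHAlg E S :=
  ⟨patAlg_zero', fun _ _ _ => rfl⟩

lemma patHAlg_add' {x y : Matrix (Fin n) (Fin n) E}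
    (hx : x ∈ patHAlg E S) (hy : y ∈ patHAlg E S) : x + y ∈ patHAlg E S := by
  refine ⟨patAlg_add' hx.1 hy.1, fun i j hj => ?_⟩
  rw [Matrix.add_apply, hx.2 i j hj, hy.2 i j hj, add_zero]

lemma patHAlg_smul' (c : F) {x : Matrix (Fin n) (Fin n) E}
    (hx : x ∈ patHAlg E S) : c • x ∈ patHAlg E S := by
  refine ⟨patAlg_smul' c hx.1, fun i j hj => ?_⟩
  rw [Matrix.smul_apply, hx.2 i j hj, smul_zero]

lemma patHAlg_neg' {x : Matrix (Fin n) (Fin n) E}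
    (hx : x ∈ patHAlg E S) : -x ∈ patHAlg E S := by
  refine ⟨patAlg_neg' hx.1, fun i j hj => ?_⟩
  rw [Matrix.neg_apply, hx.2 i j hj, neg_zero]

lemma patAlg_mul' (hS2 : ∀ i j k : Fin n, (i, j) ∈ S → (j, k) ∈ S → (i, k) ∈ S)
    {x y : Matrix (Fin n) (Fin n) E}
    (hx : x ∈ patAlg E S) (hy : y ∈ patAlg E S) : x * y ∈ patAlg E S := by
  intro i j hij
  rw [Matrix.mul_apply]
  apply Finset.sum_eq_zero
  intro l _
  by_cases h1 : (i, l) ∈ S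
  · by_cases h2 : (l, j) ∈ S
    · exact absurd (hS2 i l j h1 h2) hij
    · rw [hy l j h2, mul_zero]
  · rw [hx i l h1, zero_mul]

lemma patHAlg_mul' (hS2 : ∀ i j k : Fin n, (i, j) ∈ S → (j, k) ∈ S → (i, k) ∈ S)
    {x y : Matrix (Fin n) (Fin n) E}
    (hx : x ∈ patAlg E S) (hy : y ∈ patHAlg E S) : x * y ∈ patHAlg E S := by
  refine ⟨patAlg_mul' hS2 hx hy.1, fun i j hj => ?_⟩
  rw [Matrix.mul_apply]
  apply Finset.sum_eq_zero
  intro l _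
  rw [hy.2 l j hj, mul_zero]

lemma patAlg_pow_entry' (hS1 : ∀ p ∈ S, p.1 < p.2)
    {x : Matrix (Fin n) (Fin n) E} (hx : x ∈ patAlg E S) :
    ∀ k : ℕ, ∀ i j : Fin n, (j : ℕ) < (i : ℕ) + k → (x ^ k) i j = 0 := by
  intro k
  induction k with
  | zero =>
    intro i j hij
    rw [pow_zero]
    exact Matrix.one_apply_ne (by intro h; subst h; omega)
  | succ k ih =>
    intro i j hij
    rw [pow_succ, Matrix.mul_apply]
    apply Finset.sum_eq_zero
    intro l _
    by_cases hl : (l : ℕ) < (i : ℕ) + k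
    · rw [ih i l hl, zero_mul]
    · have hlj : (l, j) ∉ S := by
        intro hm
        have h2 : l < j := hS1 (l, j) hm
        rw [Fin.lt_def] at h2
        omega
      rw [hx l j hlj, mul_zero]

lemma patAlg_pow_eq_zero' (hS1 : ∀ p ∈ S, p.1 < p.2)
    {x : Matrix (Fin n) (Fin n) E} (hx : x ∈ patAlg E S) : x ^ n = 0 := by
  ext i j
  rw [Matrix.zero_apply]
  exact patAlg_pow_entry' hS1 hx n i j (by omega)

/-- inverse of a unipotent element `1 + y`, `y ∈ 𝔥`, has the form `1 + w`, `w ∈ 𝔥`. -/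
lemma patHAlg_inv' (hS1 : ∀ p ∈ S, p.1 < p.2)
    (hS2 : ∀ i j k : Fin n, (i, j) ∈ S → (j, k) ∈ S → (i, k) ∈ S)
    {y : Matrix (Fin n) (Fin n) E} (hy : y ∈ patHAlg E S) :
    ∃ w ∈ patHAlg E S, (1 + y) * (1 + w) = 1 ∧ (1 + w) * (1 + y) = 1 := by
  rcases Nat.eq_zero_or_pos n with hn | hn
  · refine ⟨0, patHAlg_zero', ?_, ?_⟩ <;>
    · ext i j
      exact absurd i.isLt (by omega)
  set u : Matrix (Fin n) (Fin n) E := -y with hu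
  have hu_mem : u ∈ patHAlg E S := patHAlg_neg' hy
  have hpow : ∀ k : ℕ, u ^ (k + 1) ∈ patHAlg E S := by
    intro k
    induction k with
    | zero => rw [pow_one]; exact hu_mem
    | succ k ih =>
      rw [pow_succ]
      have hmem : u ^ (k + 1) ∈ patAlg E S := ih.1
      exact patHAlg_mul' hS2 hmem hu_mem
  refine ⟨∑ i ∈ Finset.Ico 1 n, u ^ i, ?_, ?_, ?_⟩
  · apply Finset.sum_induction _ (· ∈ patHAlg E S)
      (fun _ _ ha hb => patHAlg_add' ha hb) patHAlg_zero'
    intro i hi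
    rw [Finset.mem_Ico] at hi
    obtain ⟨k, rfl⟩ : ∃ k, i = k + 1 := ⟨i - 1, by omega⟩
    exact hpow k
  all_goals {
    have hsum : (1 : Matrix (Fin n) (Fin n) E) + ∑ i ∈ Finset.Ico 1 n, u ^ i =
        ∑ i ∈ Finset.range n, u ^ i := by
      rw [Finset.sum_range_eq_add_Ico _ hn, pow_zero]
    have hun : u ^ n = 0 := patAlg_pow_eq_zero' hS1 hu_mem.1
    have h1u : (1 : Matrix (Fin n) (Fin n) E) + y = 1 - u := by
      rw [hu, sub_neg_eq_add]
    rw [hsum, h1u]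
    first
    | · have h2 : (1 - u) * ∑ i ∈ Finset.range n, u ^ i = 1 - u ^ n := by
          rw [← neg_sub u 1, neg_mul, mul_geom_sum, neg_sub]
        rw [h2, hun, sub_zero]
    | · have h2 : (∑ i ∈ Finset.range n, u ^ i) * (1 - u) = 1 - u ^ n := by
          rw [← neg_sub u 1, mul_neg, geom_sum_mul, neg_sub]
        rw [h2, hun, sub_zero]
  }

variable (F E S) in
/-- `𝔤` as an `F`-submodule of the matrix space. -/
def patAlgSub : Submodule F (Matrix (Fin n) (Fin n) E) where
  carrier := patAlg E S
  add_mem' := patAlg_add'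
  zero_mem' := patAlg_zero'
  smul_mem' c x := patAlg_smul' c

variable (F E S) in
/-- `𝔥` as an `F`-submodule of the matrix space. -/
def patHAlgSub : Submodule F (Matrix (Fin n) (Fin n) E) where
  carrier := patHAlg E S
  add_mem' := patHAlg_add'
  zero_mem' := patHAlg_zero'
  smul_mem' c x := patHAlg_smul' c

end AuxStatement10

/-- With `G = 1 + 𝔤` a pattern subgroup, `†` an anti-involution as above,
`𝔥 = {x ∈ 𝔤 | x_ij = 0 if j ≤ n/2}` and `H = 1 + 𝔥`: for `λ ∈ 𝔤*` (represented by a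
functional `lam` on the full matrix space, with elements of `𝔤*` recorded as functions
`𝔤 → F`) and `𝔩_λ = {x ∈ 𝔤 | λ(yx) = 0 for all y ∈ 𝔥}`, the orbit
`Hλ = {hλ | h ∈ H}`, where `(hλ)(x) = λ(h⁻¹x)`, equals
`{μ ∈ 𝔤* | μ(x) = λ(x) for all x ∈ 𝔩_λ}`. -/
theorem H_orbit_eq_functionals_agreeing_on_left_ideal
    (F : Type) [Field F] [Fintype F] (E : Type) [Field E] [Fintype E] [Algebra F E]
    (hodd : ringChar F ≠ 2)
    {n : ℕ} (S : Set (Fin n × Fin n))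
    (hS1 : ∀ p ∈ S, p.1 < p.2)
    (hS2 : ∀ i j k : Fin n, (i, j) ∈ S → (j, k) ∈ S → (i, k) ∈ S)
    (dag : Matrix (Fin n) (Fin n) E → Matrix (Fin n) (Fin n) E)
    (hdag : IsPatternAntiInvolution F E S dag)
    (lam : Module.Dual F (Matrix (Fin n) (Fin n) E)) :
    {ψ : ↥(patAlg E S) → F | ∃ h ∈ patHGrp E S,
        ∀ x : ↥(patAlg E S), ψ x = lam (h⁻¹ * (x : Matrix (Fin n) (Fin n) E))} =
      {ψ : ↥(patAlg E S) → F | ∃ mu : Module.Dual F (Matrix (Fin n) (Fin n) E),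
        (∀ x : ↥(patAlg E S), ψ x = mu (x : Matrix (Fin n) (Fin n) E)) ∧
        ∀ x ∈ patAlg E S, (∀ y ∈ patHAlg E S, lam (y * x) = 0) → mu x = lam x} := by
  classical
  set M := Matrix (Fin n) (Fin n) E with hM
  let gS : Submodule F M := patAlgSub F E S
  let hS : Submodule F M := patHAlgSub F E S
  let B : M →ₗ[F] M →ₗ[F] F := (LinearMap.mul F M).compr₂ lam
  have hB : ∀ z x : M, B z x = lam (z * x) := fun z x => rfl
  let T : hS →ₗ[F] Module.Dual F gS := (B.comp hS.subtype).compl₂ gS.subtype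
  have hT : ∀ (z : hS) (x : gS), T z x = lam ((z : M) * (x : M)) := fun z x => rfl
  let W : Submodule F (Module.Dual F gS) := LinearMap.range T
  ext ψ
  simp only [Set.mem_setOf_eq]
  constructor
  · rintro ⟨h, ⟨y, hy, rfl⟩, hψ⟩
    obtain ⟨w, hw, h1, h2⟩ := patHAlg_inv' hS1 hS2 hy
    have hinv : (1 + y)⁻¹ = 1 + w := Matrix.inv_eq_right_inv h1
    refine ⟨B (1 + w), fun x => ?_, fun x hx hxl => ?_⟩
    · rw [hψ x, hinv, hB]
    · rw [hB, add_mul, one_mul, map_add, hxl w hw, add_zero]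
  · rintro ⟨mu, hmu, hagree⟩
    let ν : Module.Dual F gS := (mu - lam).comp gS.subtype
    have hν : ν ∈ W.dualCoannihilator.dualAnnihilator := by
      rw [Submodule.mem_dualAnnihilator]
      intro x hx
      rw [Submodule.mem_dualCoannihilator] at hx
      have h1 : ∀ y ∈ patHAlg E S, lam (y * (x : M)) = 0 := by
        intro y hy
        have := hx (T ⟨y, hy⟩) ⟨⟨y, hy⟩, rfl⟩
        rwa [hT] at this
      have h2 : mu (x : M) = lam (x : M) := hagree (x : M) x.2 h1
      show (mu - lam) ((x : M)) = 0
      rw [LinearMap.sub_apply, h2, sub_self]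
    have hfin : FiniteDimensional F gS := inferInstance
    rw [Subspace.dualCoannihilator_dualAnnihilator_eq] at hν
    obtain ⟨z, hz⟩ := hν
    obtain ⟨w, hw, h1, h2⟩ := patHAlg_inv' hS1 hS2 z.2
    refine ⟨1 + w, ⟨w, hw, rfl⟩, fun x => ?_⟩
    have hinv : (1 + w)⁻¹ = 1 + (z : M) := Matrix.inv_eq_right_inv h2
    have hx : (x : M) ∈ gS := x.2
    have hzx := LinearMap.congr_fun hz (⟨(x : M), hx⟩ : gS)
    rw [hT] at hzx
    have hνx : ν (⟨(x : M), hx⟩ : gS) = mu (x : M) - lam (x : M) := by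
      show (mu - lam) ((x : M)) = _
      rw [LinearMap.sub_apply]
    rw [hνx] at hzx
    rw [hmu x, hinv, add_mul, one_mul, map_add, hzx]
    ring
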